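/- The update operator U is continuous at every weakly regular profile with respect to the supremum norm: if f is an (m,M)-weakly regular profile, then for every ε > 0 there exists δ > 0 such that every profile g with ‖f − g‖_∞ < δ satisfies ‖Uf − Ug‖_∞ < ε. -/

import Mathlib

open MeasureTheory Set

/-- The neighbourhood `N_α(f)` of an agent `α ∈ [0,1]`:
all agents `β ∈ [0,1]` whose opinion is within distance 1 of that of `α`. -/
def nbhdHK (f : ℝ → ℝ) (α : ℝ) : Set ℝ :=
  {β | β ∈ Icc (0:ℝ) 1 ∧ |f β - f α| ≤ 1}

/-- The Hegselmann–Krause updating operator `U`: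
`Uf(α)` is the average of `f` over `N_α(f)` if that set has positive Lebesgue
measure, and `f(α)` otherwise. -/
noncomputable def updateHK (f : ℝ → ℝ) (α : ℝ) : ℝ :=
  if 0 < (volume (nbhdHK f α)).toReal then
    (∫ β in nbhdHK f α, f β) / (volume (nbhdHK f α)).toReal
  else f α

/-- `f` is `(m,M)`-regular on `S`: `m·|α-β| ≤ |f(α)-f(β)| ≤ M·|α-β|` on `S`. -/
def RegularOnHK (m M : ℝ) (f : ℝ → ℝ) (S : Set ℝ) : Prop :=
  ∀ α ∈ S, ∀ β ∈ S, m * |α - β| ≤ |f α - f β| ∧ |f α - f β| ≤ M * |α - β|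

/-- `f` is `(m,M)`-weakly regular: there is a closed (possibly empty)
subinterval `S = [a,b]` of `N₀(f) ∩ N₁(f)` such that `f` is `(m,M)`-regular on
`[0,1] \ S`, `f` is constant on `S`, and, if `D(f) ≤ 2`, neither endpoint of the
interval `N₀(f) ∩ N₁(f)` is an endpoint of `S`. -/
def WeaklyRegularHK (m M : ℝ) (f : ℝ → ℝ) : Prop :=
  ∃ a b : ℝ, Icc a b ⊆ nbhdHK f 0 ∩ nbhdHK f 1 ∧
    RegularOnHK m M f (Icc (0:ℝ) 1 \ Icc a b) ∧
    (∀ x ∈ Icc a b, f x = f a) ∧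
    (f 1 - f 0 ≤ 2 → a ≤ b →
      a ≠ sInf (nbhdHK f 0 ∩ nbhdHK f 1) ∧ a ≠ sSup (nbhdHK f 0 ∩ nbhdHK f 1) ∧
      b ≠ sInf (nbhdHK f 0 ∩ nbhdHK f 1) ∧ b ≠ sSup (nbhdHK f 0 ∩ nbhdHK f 1))


lemma ordConn_band (f : ℝ → ℝ) (hmono : MonotoneOn f (Icc 0 1)) (s : Set ℝ)
    (hs : OrdConnected s) :
    OrdConnected {β | β ∈ Icc (0:ℝ) 1 ∧ f β ∈ s} := by
  constructor
  rintro x ⟨hxI, hxs⟩ y ⟨hyI, hys⟩ z hz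
  have hzI : z ∈ Icc (0:ℝ) 1 := ⟨le_trans hxI.1 hz.1, le_trans hz.2 hyI.2⟩
  exact ⟨hzI, hs.out hxs hys ⟨hmono hxI hzI hz.1, hmono hzI hyI hz.2⟩⟩

lemma meas_band (f : ℝ → ℝ) (hmono : MonotoneOn f (Icc 0 1)) (s : Set ℝ)
    (hs : OrdConnected s) :
    MeasurableSet {β | β ∈ Icc (0:ℝ) 1 ∧ f β ∈ s} :=
  (ordConn_band f hmono s hs).measurableSet

lemma vol_mono_aux {S T : Set ℝ} (hST : S ⊆ T) (hT : T ⊆ Icc (0:ℝ) 1) :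
    (volume S).toReal ≤ (volume T).toReal := by
  have hTfin : volume T ≠ ⊤ := by
    refine ne_top_of_le_ne_top ?_ (measure_mono hT)
    simp [Real.volume_Icc]
  exact ENNReal.toReal_mono hTfin (measure_mono hST)

/-- Average comparison: if `L ⊆ A ⊆ U`, `|h| ≤ 2` on `U`, `vol L ≥ μ₀`,
`vol U - vol L ≤ ρ`, then averages of `h` over `A` and `L` differ by `≤ 4ρ/μ₀`. -/
lemma avg_shift (h : ℝ → ℝ) (L A U : Set ℝ)
    (hLA : L ⊆ A) (hAU : A ⊆ U) (hUI : U ⊆ Icc (0:ℝ) 1)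
    (mL : MeasurableSet L) (mA : MeasurableSet A)
    (hint : IntegrableOn h U volume) (hbd : ∀ x ∈ U, |h x| ≤ 2)
    (μ₀ ρ : ℝ) (hμ0 : 0 < μ₀) (hμ : μ₀ ≤ (volume L).toReal)
    (hρ : (volume U).toReal - (volume L).toReal ≤ ρ) :
    |(∫ x in A, h x) / (volume A).toReal - (∫ x in L, h x) / (volume L).toReal|
      ≤ 4 * ρ / μ₀ := by
  set lL := (volume L).toReal with hlL
  set lA := (volume A).toReal with hlA
  have hLU : L ⊆ U := hLA.trans hAU
  have hfinU : volume U ≠ ⊤ := by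
    refine ne_top_of_le_ne_top ?_ (measure_mono hUI)
    simp [Real.volume_Icc]
  have hfinA : volume A ≠ ⊤ := ne_top_of_le_ne_top hfinU (measure_mono hAU)
  have hfinL : volume L ≠ ⊤ := ne_top_of_le_ne_top hfinU (measure_mono hLU)
  have hfinD : volume (A \ L) ≠ ⊤ := ne_top_of_le_ne_top hfinA (measure_mono diff_subset)
  set e := (volume (A \ L)).toReal with he
  have hsplit : lA = lL + e := by
    have h1 : volume (L ∪ A \ L) = volume L + volume (A \ L) :=
      measure_union disjoint_sdiff_self_right (mA.diff mL)
    rw [union_diff_cancel hLA] at h1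
    rw [hlA, h1, ENNReal.toReal_add hfinL hfinD]
  have hintA : IntegrableOn h A volume := hint.mono_set hAU
  have hintL : IntegrableOn h L volume := hint.mono_set hLU
  have hintD : IntegrableOn h (A \ L) volume := hintA.mono_set diff_subset
  have hIsplit : (∫ x in A, h x) = (∫ x in L, h x) + ∫ x in A \ L, h x := by
    rw [← setIntegral_union disjoint_sdiff_self_right (mA.diff mL) hintL hintD,
      union_diff_cancel hLA]
  have hlLpos : 0 < lL := lt_of_lt_of_le hμ0 hμ
  have hepos : 0 ≤ e := ENNReal.toReal_nonneg
  have hlApos : 0 < lA := by rw [hsplit]; linarith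
  have hDbd : |∫ x in A \ L, h x| ≤ 2 * e := by
    have := norm_setIntegral_le_of_norm_le_const (μ := volume) (s := A \ L) (f := h)
      (C := 2) (lt_top_iff_ne_top.2 hfinD)
      (fun x hx => by simpa using hbd x (hAU hx.1))
    simpa [Measure.real] using this
  have hLbd : |∫ x in L, h x| ≤ 2 * lL := by
    have := norm_setIntegral_le_of_norm_le_const (μ := volume) (s := L) (f := h)
      (C := 2) (lt_top_iff_ne_top.2 hfinL)
      (fun x hx => by simpa using hbd x (hLU hx))
    simpa [Measure.real] using this
  have heρ : e ≤ ρ := by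
    have h2 : lA ≤ (volume U).toReal := vol_mono_aux hAU hUI
    linarith
  have key : (∫ x in A, h x) / lA - (∫ x in L, h x) / lL
      = (lL * (∫ x in A \ L, h x) - e * (∫ x in L, h x)) / (lA * lL) := by
    rw [hIsplit, hsplit]; field_simp; ring
  rw [key, abs_div, abs_of_pos (by positivity : (0:ℝ) < lA * lL)]
  have hnum : |lL * (∫ x in A \ L, h x) - e * (∫ x in L, h x)| ≤ 4 * e * lL := by
    have h1 : |lL * (∫ x in A \ L, h x)| ≤ lL * (2 * e) := by
      rw [abs_mul, abs_of_pos hlLpos]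
      exact mul_le_mul_of_nonneg_left hDbd hlLpos.le
    have h2 : |e * (∫ x in L, h x)| ≤ e * (2 * lL) := by
      rw [abs_mul, abs_of_nonneg hepos]
      exact mul_le_mul_of_nonneg_left hLbd hepos
    calc |lL * (∫ x in A \ L, h x) - e * (∫ x in L, h x)|
        ≤ |lL * (∫ x in A \ L, h x)| + |e * (∫ x in L, h x)| := abs_sub _ _
      _ ≤ lL * (2 * e) + e * (2 * lL) := add_le_add h1 h2
      _ = 4 * e * lL := by ring
  calc |lL * (∫ x in A \ L, h x) - e * (∫ x in L, h x)| / (lA * lL)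
      ≤ (4 * e * lL) / (lA * lL) := by gcongr
    _ = 4 * e / lA := by rw [mul_div_mul_right _ _ (ne_of_gt hlLpos)]
    _ ≤ 4 * ρ / μ₀ := by
        apply div_le_div₀ (by linarith) (by linarith) hμ0 (le_trans hμ ?_)
        rw [hsplit]; linarith

lemma vol_le_of_pairwise (P : Set ℝ) (hPI : P ⊆ Icc (0:ℝ) 1) (r : ℝ) (hr : 0 ≤ r)
    (hpair : ∀ x ∈ P, ∀ y ∈ P, x - y ≤ r) : (volume P).toReal ≤ r := by
  rcases P.eq_empty_or_nonempty with h | ⟨z, hz⟩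
  · simp [h, hr]
  · have hbdd : BddAbove P := BddAbove.mono hPI bddAbove_Icc
    have hbddb : BddBelow P := BddBelow.mono hPI bddBelow_Icc
    have hsub2 : P ⊆ Icc (sInf P) (sSup P) := fun x hx => ⟨csInf_le hbddb hx, le_csSup hbdd hx⟩
    have h1 : sSup P ≤ sInf P + r := csSup_le ⟨z, hz⟩ fun x hx => by
      have h2 : x - r ≤ sInf P := le_csInf ⟨z, hz⟩ fun y hy => by linarith [hpair x hx y hy]
      linarith
    have h2 : sInf P ≤ sSup P := csInf_le_csSup ⟨z, hz⟩ hbddb hbdd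
    calc (volume P).toReal ≤ (volume (Icc (sInf P) (sSup P))).toReal :=
          vol_mono_aux hsub2 (Icc_subset_Icc ((hPI hz).1.trans (le_csSup hbdd hz) |> fun _ => (le_csSup hbdd hz).trans' (hPI hz).1 |> fun _ => le_csInf ⟨z, hz⟩ fun y hy => (hPI hy).1) ((csSup_le ⟨z, hz⟩ fun y hy => (hPI hy).2)))
      _ = sSup P - sInf P := by rw [Real.volume_Icc, ENNReal.toReal_ofReal (by linarith)]
      _ ≤ r := by linarith

set_option maxHeartbeats 2000000

/-- `U` is continuous, w.r.t. the sup norm on `[0,1]`, at every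
weakly regular profile. -/
theorem stmt7 (m M : ℝ) (hm : 0 < m) (hM : 0 < M) (f : ℝ → ℝ)
    (hmono : MonotoneOn f (Icc 0 1)) (hwr : WeaklyRegularHK m M f) :
    ∀ ε > 0, ∃ δ > 0, ∀ g : ℝ → ℝ, MonotoneOn g (Icc 0 1) →
      (∀ α ∈ Icc (0:ℝ) 1, |f α - g α| < δ) →
      ∀ α ∈ Icc (0:ℝ) 1, |updateHK f α - updateHK g α| < ε := by
  obtain ⟨a, b, hsub, hreg, hconst, hend⟩ := hwr
  intro ε hε
  have h01 : (0:ℝ) ∈ Icc (0:ℝ) 1 := by norm_num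
  have h11 : (1:ℝ) ∈ Icc (0:ℝ) 1 := by norm_num
  have hIvol : (volume (Icc (0:ℝ) 1)).toReal = 1 := by simp [Real.volume_Icc]
  have hsubI : Icc a b ⊆ Icc (0:ℝ) 1 := fun x hx => (hsub hx).1.1
  have hrange : ∀ β ∈ Icc (0:ℝ) 1, f 0 ≤ f β ∧ f β ≤ f 1 := fun β hβ =>
    ⟨hmono h01 hβ hβ.1, hmono hβ h11 hβ.2⟩
  -- the key "gap" property: the plateau value is at distance strictly less
  -- than 1 from both f 0 and f 1.
  have hgapmain : ∃ η > 0, ∀ x ∈ Icc a b, η - 1 ≤ f 0 - f x ∧ η - 1 ≤ f x - f 1 := by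
    rcases le_or_gt a b with hab | hab
    · have haab : a ∈ Icc a b := left_mem_Icc.2 hab
      have hbab : b ∈ Icc a b := right_mem_Icc.2 hab
      have haI := hsubI haab
      have hbI := hsubI hbab
      have ha0 : |f a - f 0| ≤ 1 := (hsub haab).1.2
      have ha1 : |f a - f 1| ≤ 1 := (hsub haab).2.2
      rw [abs_le] at ha0 ha1
      have hfb : f b = f a := hconst b hbab
      have hTsub : nbhdHK f 0 ∩ nbhdHK f 1 ⊆ Icc (0:ℝ) 1 := fun x hx => hx.1.1
      have hbddA : BddAbove (nbhdHK f 0 ∩ nbhdHK f 1) := BddAbove.mono hTsub bddAbove_Icc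
      have hbddB : BddBelow (nbhdHK f 0 ∩ nbhdHK f 1) := BddBelow.mono hTsub bddBelow_Icc
      have hη1 : 0 < f 0 - f a + 1 := by
        rcases lt_or_eq_of_le (by linarith : f a - 1 ≤ f 0) with h | h
        · linarith
        · exfalso
          have hD : f 1 - f 0 ≤ 2 := by linarith
          obtain ⟨-, -, -, hbS⟩ := hend hD hab
          apply hbS
          have hbT : b ∈ nbhdHK f 0 ∩ nbhdHK f 1 := hsub hbab
          have hub : ∀ x ∈ nbhdHK f 0 ∩ nbhdHK f 1, x ≤ b := by
            intro x hx
            by_contra hbx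
            push_neg at hbx
            have hxI : x ∈ Icc (0:ℝ) 1 := hTsub hx
            have hyb : b < (b + x)/2 := by linarith
            have hyx : (b + x)/2 < x := by linarith
            have hyI : (b + x)/2 ∈ Icc (0:ℝ) 1 := ⟨le_trans hbI.1 hyb.le, le_trans hyx.le hxI.2⟩
            have hyc : (b + x)/2 ∈ Icc (0:ℝ) 1 \ Icc a b :=
              ⟨hyI, fun hyab => absurd hyab.2 (not_le.2 hyb)⟩
            have hxc : x ∈ Icc (0:ℝ) 1 \ Icc a b :=
              ⟨hxI, fun hxab => absurd hxab.2 (not_le.2 (lt_trans hyb hyx))⟩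
            have hregxy := (hreg x hxc ((b + x)/2) hyc).1
            have hfyx : f ((b + x)/2) ≤ f x := hmono hyI hxI hyx.le
            have hfby : f a ≤ f ((b + x)/2) := hfb ▸ hmono hbI hyI hyb.le
            rw [abs_of_pos (by linarith : (0:ℝ) < x - (b + x)/2),
              abs_of_nonneg (by linarith : (0:ℝ) ≤ f x - f ((b + x)/2))] at hregxy
            have hx0 : |f x - f 0| ≤ 1 := hx.1.2
            rw [abs_le] at hx0
            have hmxy : 0 < m * (x - (b + x)/2) := mul_pos hm (by linarith)
            linarith
          exact (le_antisymm (csSup_le ⟨b, hbT⟩ hub) (le_csSup hbddA hbT)).symm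
      have hη2 : 0 < f a + 1 - f 1 := by
        rcases lt_or_eq_of_le (by linarith : f 1 ≤ f a + 1) with h | h
        · linarith
        · exfalso
          have hD : f 1 - f 0 ≤ 2 := by linarith
          obtain ⟨haS, -, -, -⟩ := hend hD hab
          apply haS
          have haT : a ∈ nbhdHK f 0 ∩ nbhdHK f 1 := hsub haab
          have hlb : ∀ x ∈ nbhdHK f 0 ∩ nbhdHK f 1, a ≤ x := by
            intro x hx
            by_contra hax
            push_neg at hax
            have hxI : x ∈ Icc (0:ℝ) 1 := hTsub hx
            have hyx : x < (x + a)/2 := by linarith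
            have hya : (x + a)/2 < a := by linarith
            have hyI : (x + a)/2 ∈ Icc (0:ℝ) 1 := ⟨le_trans hxI.1 hyx.le, le_trans hya.le haI.2⟩
            have hyc : (x + a)/2 ∈ Icc (0:ℝ) 1 \ Icc a b :=
              ⟨hyI, fun hyab => absurd hyab.1 (not_le.2 hya)⟩
            have hxc : x ∈ Icc (0:ℝ) 1 \ Icc a b :=
              ⟨hxI, fun hxab => absurd hxab.1 (not_le.2 (lt_trans hyx hya))⟩
            have hregxy := (hreg ((x + a)/2) hyc x hxc).1
            have hfxy : f x ≤ f ((x + a)/2) := hmono hxI hyI hyx.le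
            have hfya : f ((x + a)/2) ≤ f a := hmono hyI haI hya.le
            rw [abs_of_pos (by linarith : (0:ℝ) < (x + a)/2 - x),
              abs_of_nonneg (by linarith : (0:ℝ) ≤ f ((x + a)/2) - f x)] at hregxy
            have hx1 : |f x - f 1| ≤ 1 := hx.2.2
            rw [abs_le] at hx1
            have hmxy : 0 < m * ((x + a)/2 - x) := mul_pos hm (by linarith)
            linarith
          exact le_antisymm (le_csInf ⟨a, haT⟩ hlb) (csInf_le hbddB haT)
      refine ⟨min (f 0 - f a + 1) (f a + 1 - f 1), lt_min hη1 hη2, ?_⟩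
      intro x hx
      rw [hconst x hx]
      exact ⟨by linarith [min_le_left (f 0 - f a + 1) (f a + 1 - f 1)],
        by linarith [min_le_right (f 0 - f a + 1) (f a + 1 - f 1)]⟩
    · exact ⟨1, one_pos, fun x hx => absurd hx (by simp [Icc_eq_empty hab.not_ge])⟩
  obtain ⟨η, hηpos, hgap⟩ := hgapmain
  set c : ℝ := 1/(2*M) with hc
  have hcpos : 0 < c := by positivity
  have hMc : M * c = 1/2 := by rw [hc]; field_simp
  set c₁ : ℝ := if b < 1 then 1 - b else 1 with hc₁
  set c₂ : ℝ := if 0 < a then a else 1 with hc₂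
  have hc₁pos : 0 < c₁ := by
    rw [hc₁]
    split_ifs with h
    · linarith
    · norm_num
  have hc₂pos : 0 < c₂ := by
    rw [hc₂]
    split_ifs with h
    · linarith
    · norm_num
  set μ₀ : ℝ := min c (min 1 (min c₁ c₂)) with hμ₀
  have hμ₀pos : 0 < μ₀ := lt_min hcpos (lt_min one_pos (lt_min hc₁pos hc₂pos))
  have hμ₀c : μ₀ ≤ c := min_le_left _ _
  have hμ₀1 : μ₀ ≤ 1 := le_trans (min_le_right _ _) (min_le_left _ _)
  have hμ₀b : b < 1 → μ₀ ≤ 1 - b := by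
    intro h
    have h1 : μ₀ ≤ c₁ := le_trans (min_le_right _ _)
      (le_trans (min_le_right _ _) (min_le_left _ _))
    rwa [hc₁, if_pos h] at h1
  have hμ₀a : 0 < a → μ₀ ≤ a := by
    intro h
    have h1 : μ₀ ≤ c₂ := le_trans (min_le_right _ _)
      (le_trans (min_le_right _ _) (min_le_right _ _))
    rwa [hc₂, if_pos h] at h1
  set C : ℝ := 1 + 64/(m*μ₀) with hC
  have hCpos : 0 < C := by positivity
  refine ⟨min (1/8) (min (η/2) (ε/(2*C))), lt_min (by norm_num) (lt_min (by positivity) (by positivity)), ?_⟩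
  intro g hgmono hgδ α hαI
  set δ : ℝ := min (1/8) (min (η/2) (ε/(2*C))) with hδdef
  have hδpos : 0 < δ := lt_min (by norm_num) (lt_min (by positivity) (by positivity))
  have hδ8 : δ ≤ 1/8 := min_le_left _ _
  have hδη : 2*δ ≤ η := by
    have h1 : δ ≤ η/2 := le_trans (min_le_right _ _) (min_le_left _ _)
    linarith
  have hδε : δ * (2*C) ≤ ε := by
    have h1 : δ ≤ ε/(2*C) := le_trans (min_le_right _ _) (min_le_right _ _)
    rw [le_div_iff₀ (by positivity)] at h1
    linarith
  clear_value δ C μ₀ c c₁ c₂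
  -- the sandwiching sets
  set L : Set ℝ := {β | β ∈ Icc (0:ℝ) 1 ∧ f β ∈ Icc (f α - (1-2*δ)) (f α + (1-2*δ))} with hLdef
  set Up : Set ℝ := {β | β ∈ Icc (0:ℝ) 1 ∧ f β ∈ Icc (f α - (1+2*δ)) (f α + (1+2*δ))} with hUdef
  set Pp : Set ℝ := {β | β ∈ Icc (0:ℝ) 1 ∧ f β ∈ Ioc (f α + (1-2*δ)) (f α + (1+2*δ))} with hPpdef
  set Pm : Set ℝ := {β | β ∈ Icc (0:ℝ) 1 ∧ f β ∈ Ico (f α - (1+2*δ)) (f α - (1-2*δ))} with hPmdef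
  have memIff : ∀ (r β : ℝ), (f β ∈ Icc (f α - r) (f α + r)) ↔ |f β - f α| ≤ r := by
    intro r β
    rw [mem_Icc, abs_le]
    constructor <;> rintro ⟨h1, h2⟩ <;> exact ⟨by linarith, by linarith⟩
  have hLmem : ∀ β, β ∈ L ↔ (β ∈ Icc (0:ℝ) 1 ∧ |f β - f α| ≤ 1-2*δ) := by
    intro β; rw [hLdef]; simp only [mem_setOf_eq, memIff]
  have hUmem : ∀ β, β ∈ Up ↔ (β ∈ Icc (0:ℝ) 1 ∧ |f β - f α| ≤ 1+2*δ) := by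
    intro β; rw [hUdef]; simp only [mem_setOf_eq, memIff]
  have hAmem : ∀ β, β ∈ nbhdHK f α ↔ (β ∈ Icc (0:ℝ) 1 ∧ |f β - f α| ≤ 1) := by
    intro β; exact Iff.rfl
  have hBmem : ∀ β, β ∈ nbhdHK g α ↔ (β ∈ Icc (0:ℝ) 1 ∧ |g β - g α| ≤ 1) := by
    intro β; exact Iff.rfl
  -- measurability
  have mL : MeasurableSet L := meas_band f hmono _ ordConnected_Icc
  have mU : MeasurableSet Up := meas_band f hmono _ ordConnected_Icc
  have mPp : MeasurableSet Pp := meas_band f hmono _ ordConnected_Ioc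
  have mPm : MeasurableSet Pm := meas_band f hmono _ ordConnected_Ico
  have mA : MeasurableSet (nbhdHK f α) := by
    have h1 := meas_band f hmono (Icc (f α - 1) (f α + 1)) ordConnected_Icc
    have h2 : nbhdHK f α = {β | β ∈ Icc (0:ℝ) 1 ∧ f β ∈ Icc (f α - 1) (f α + 1)} := by
      ext β
      rw [hAmem β, mem_setOf_eq, memIff]
    rwa [h2]
  have mB : MeasurableSet (nbhdHK g α) := by
    have memIffg : ∀ β, (g β ∈ Icc (g α - 1) (g α + 1)) ↔ |g β - g α| ≤ 1 := by
      intro β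
      rw [mem_Icc, abs_le]
      constructor <;> rintro ⟨h1, h2⟩ <;> exact ⟨by linarith, by linarith⟩
    have h1 := meas_band g hgmono (Icc (g α - 1) (g α + 1)) ordConnected_Icc
    have h2 : nbhdHK g α = {β | β ∈ Icc (0:ℝ) 1 ∧ g β ∈ Icc (g α - 1) (g α + 1)} := by
      ext β
      rw [hBmem β, mem_setOf_eq, memIffg]
    rwa [h2]
  -- inclusions
  have hLI : L ⊆ Icc (0:ℝ) 1 := fun β hβ => ((hLmem β).1 hβ).1
  have hUI : Up ⊆ Icc (0:ℝ) 1 := fun β hβ => ((hUmem β).1 hβ).1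
  have hAI : nbhdHK f α ⊆ Icc (0:ℝ) 1 := fun β hβ => hβ.1
  have hBI : nbhdHK g α ⊆ Icc (0:ℝ) 1 := fun β hβ => hβ.1
  have hLA : L ⊆ nbhdHK f α := by
    intro β hβ
    obtain ⟨h1, h2⟩ := (hLmem β).1 hβ
    exact ⟨h1, by linarith⟩
  have hAU : nbhdHK f α ⊆ Up := by
    intro β hβ
    exact (hUmem β).2 ⟨hβ.1, by linarith [hβ.2]⟩
  have hLB : L ⊆ nbhdHK g α := by
    intro β hβ
    obtain ⟨h1, h2⟩ := (hLmem β).1 hβ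
    have hg1 := hgδ β h1
    have hg2 := hgδ α hαI
    refine ⟨h1, ?_⟩
    have t1 : |g β - g α| ≤ |g β - f β| + (|f β - f α| + |f α - g α|) :=
      le_trans (abs_sub_le (g β) (f β) (g α))
        (by linarith [abs_sub_le (f β) (f α) (g α)])
    rw [abs_sub_comm (g β) (f β)] at t1
    linarith
  have hBU : nbhdHK g α ⊆ Up := by
    intro β hβ
    obtain ⟨h1, h2⟩ := hβ
    have hg1 := hgδ β h1
    have hg2 := hgδ α hαI
    refine (hUmem β).2 ⟨h1, ?_⟩
    have t1 : |f β - f α| ≤ |f β - g β| + (|g β - g α| + |g α - f α|) :=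
      le_trans (abs_sub_le (f β) (g β) (f α))
        (by linarith [abs_sub_le (g β) (g α) (f α)])
    rw [abs_sub_comm (g α) (f α)] at t1
    linarith
  -- plateau points are deep inside every neighbourhood
  have hgapP : ∀ β' ∈ Icc (0:ℝ) 1, ∀ x ∈ Icc a b, |f x - f β'| ≤ 1 - 2*δ := by
    intro β' hβ' x hx
    have h1 := hgap x hx
    have h2 := hrange β' hβ'
    rw [abs_le]
    exact ⟨by linarith [h1.2], by linarith [h1.1]⟩
  have hgapα : ∀ x ∈ Icc a b, |f x - f α| ≤ 1 - 2*δ := hgapP α hαI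
  -- uniform lower bound on the measure of L
  have hvolL : μ₀ ≤ (volume L).toReal := by
    by_cases hplat : a ≤ b ∧ α ∈ Icc a b
    · have hIL : Icc (0:ℝ) 1 ⊆ L := by
        intro β hβ
        refine (hLmem β).2 ⟨hβ, ?_⟩
        rw [abs_sub_comm]
        exact hgapP β hβ α hplat.2
      have hLeq : L = Icc (0:ℝ) 1 := subset_antisymm hLI hIL
      rw [hLeq, hIvol]
      exact hμ₀1
    · have hαnot : α ∉ Icc a b := fun h => hplat ⟨le_trans h.1 h.2, h⟩
      have hαc : α ∈ Icc (0:ℝ) 1 \ Icc a b := ⟨hαI, hαnot⟩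
      rcases le_or_gt a α with haα | haα
      · have hbα : b < α := by
          rcases lt_or_ge b α with h | h
          · exact h
          · exact absurd ⟨haα, h⟩ hαnot
        have hJL : Ioc (max b (max 0 (α - c))) (min 1 (α + c)) ⊆ L := by
          intro β hβ
          have hβb : b < β := lt_of_le_of_lt (le_max_left _ _) hβ.1
          have hβ0 : 0 ≤ β :=
            le_of_lt (lt_of_le_of_lt
              ((le_max_left (0:ℝ) (α - c)).trans (le_max_right b (max 0 (α - c)))) hβ.1)
          have hβ1 : β ≤ 1 := hβ.2.trans (min_le_left _ _)
          have hβlo : α - c ≤ β :=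
            le_of_lt (lt_of_le_of_lt
              ((le_max_right (0:ℝ) (α - c)).trans (le_max_right b (max 0 (α - c)))) hβ.1)
          have hβhi : β ≤ α + c := hβ.2.trans (min_le_right _ _)
          have hβI2 : β ∈ Icc (0:ℝ) 1 := ⟨hβ0, hβ1⟩
          have hβc : β ∈ Icc (0:ℝ) 1 \ Icc a b := ⟨hβI2, fun h => absurd h.2 (not_le.2 hβb)⟩
          have hr := (hreg α hαc β hβc).2
          have habs : |α - β| ≤ c := abs_le.2 ⟨by linarith, by linarith⟩
          refine (hLmem β).2 ⟨hβI2, ?_⟩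
          rw [abs_sub_comm]
          calc |f α - f β| ≤ M * |α - β| := hr
            _ ≤ M * c := mul_le_mul_of_nonneg_left habs hM.le
            _ = 1/2 := hMc
            _ ≤ 1 - 2*δ := by linarith
        have hb1 : b < 1 := lt_of_lt_of_le hbα hαI.2
        have hb1' := hμ₀b hb1
        have hlen : μ₀ ≤ min 1 (α + c) - max b (max 0 (α - c)) := by
          rcases max_choice b (max 0 (α - c)) with h | h <;> rw [h]
          · rcases min_choice 1 (α + c) with h2 | h2 <;> rw [h2] <;>
              linarith [hαI.2, hαI.1]
          · rcases max_choice 0 (α - c) with h3 | h3 <;> rw [h3] <;>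
              rcases min_choice 1 (α + c) with h2 | h2 <;> rw [h2] <;>
              linarith [hαI.2, hαI.1]
        calc μ₀ ≤ min 1 (α + c) - max b (max 0 (α - c)) := hlen
          _ = (volume (Ioc (max b (max 0 (α - c))) (min 1 (α + c)))).toReal := by
              rw [Real.volume_Ioc, ENNReal.toReal_ofReal (by linarith)]
          _ ≤ (volume L).toReal := vol_mono_aux hJL hLI
      · have h0a : 0 < a := lt_of_le_of_lt hαI.1 haα
        have ha' := hμ₀a h0a
        have hJL : Ico (max 0 (α - c)) (min a (min 1 (α + c))) ⊆ L := by
          intro β hβ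
          have hβa : β < a := lt_of_lt_of_le hβ.2 (min_le_left _ _)
          have hβ0 : 0 ≤ β := (le_max_left (0:ℝ) (α - c)).trans hβ.1
          have hβ1 : β ≤ 1 :=
            le_of_lt (lt_of_lt_of_le hβ.2 ((min_le_right a (min 1 (α + c))).trans
              (min_le_left 1 (α + c))))
          have hβlo : α - c ≤ β := (le_max_right (0:ℝ) (α - c)).trans hβ.1
          have hβhi : β ≤ α + c :=
            le_of_lt (lt_of_lt_of_le hβ.2 ((min_le_right a (min 1 (α + c))).trans
              (min_le_right 1 (α + c))))
          have hβI2 : β ∈ Icc (0:ℝ) 1 := ⟨hβ0, hβ1⟩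
          have hβc : β ∈ Icc (0:ℝ) 1 \ Icc a b := ⟨hβI2, fun h => absurd h.1 (not_le.2 hβa)⟩
          have hr := (hreg α hαc β hβc).2
          have habs : |α - β| ≤ c := abs_le.2 ⟨by linarith, by linarith⟩
          refine (hLmem β).2 ⟨hβI2, ?_⟩
          rw [abs_sub_comm]
          calc |f α - f β| ≤ M * |α - β| := hr
            _ ≤ M * c := mul_le_mul_of_nonneg_left habs hM.le
            _ = 1/2 := hMc
            _ ≤ 1 - 2*δ := by linarith
        have hlen : μ₀ ≤ min a (min 1 (α + c)) - max 0 (α - c) := by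
          rcases max_choice 0 (α - c) with h | h <;> rw [h] <;>
            rcases min_choice a (min 1 (α + c)) with h2 | h2 <;> rw [h2]
          · linarith
          · rcases min_choice 1 (α + c) with h3 | h3 <;> rw [h3] <;>
              linarith [hαI.1, hαI.2]
          · linarith
          · rcases min_choice 1 (α + c) with h3 | h3 <;> rw [h3] <;>
              linarith [hαI.1, hαI.2]
        calc μ₀ ≤ min a (min 1 (α + c)) - max 0 (α - c) := hlen
          _ = (volume (Ico (max 0 (α - c)) (min a (min 1 (α + c))))).toReal := by
              rw [Real.volume_Ico, ENNReal.toReal_ofReal (by linarith)]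
          _ ≤ (volume L).toReal := vol_mono_aux hJL hLI
  -- layer bound
  have hUL : (volume Up).toReal - (volume L).toReal ≤ 8*δ/m := by
    have hLU : L ⊆ Up := hLA.trans hAU
    have hfinL : volume L ≠ ⊤ := by
      refine ne_top_of_le_ne_top ?_ (measure_mono hLI)
      simp [Real.volume_Icc]
    have hfinUL : volume (Up \ L) ≠ ⊤ := by
      refine ne_top_of_le_ne_top ?_ (measure_mono (diff_subset.trans hUI))
      simp [Real.volume_Icc]
    have hfinPp : volume Pp ≠ ⊤ := by
      refine ne_top_of_le_ne_top ?_ (measure_mono (fun x (hx : x ∈ Pp) => hx.1))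
      simp [Real.volume_Icc]
    have hfinPm : volume Pm ≠ ⊤ := by
      refine ne_top_of_le_ne_top ?_ (measure_mono (fun x (hx : x ∈ Pm) => hx.1))
      simp [Real.volume_Icc]
    have hsplit : (volume Up).toReal = (volume L).toReal + (volume (Up \ L)).toReal := by
      have h1 : volume (L ∪ Up \ L) = volume L + volume (Up \ L) :=
        measure_union disjoint_sdiff_self_right (mU.diff mL)
      rw [union_diff_cancel hLU] at h1
      rw [h1, ENNReal.toReal_add hfinL hfinUL]
    have hPpc : ∀ x ∈ Pp, x ∈ Icc (0:ℝ) 1 \ Icc a b := by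
      rintro x ⟨hxI2, hxw⟩
      refine ⟨hxI2, fun hxab => ?_⟩
      have h1 := hgapα x hxab
      rw [abs_le] at h1
      have h2 := hxw.1
      linarith [h1.1, h1.2]
    have hPmc : ∀ x ∈ Pm, x ∈ Icc (0:ℝ) 1 \ Icc a b := by
      rintro x ⟨hxI2, hxw⟩
      refine ⟨hxI2, fun hxab => ?_⟩
      have h1 := hgapα x hxab
      rw [abs_le] at h1
      have h2 := hxw.2
      linarith [h1.1, h1.2]
    have hpairp : ∀ x ∈ Pp, ∀ y ∈ Pp, x - y ≤ 4*δ/m := by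
      intro x hx y hy
      rcases le_total x y with h | h
      · have : (0:ℝ) ≤ 4*δ/m := by positivity
        linarith
      · have hxc := hPpc x hx
        have hyc := hPpc y hy
        have hr := (hreg x hxc y hyc).1
        have hfyx : f y ≤ f x := hmono hyc.1 hxc.1 h
        rw [abs_of_nonneg (by linarith : (0:ℝ) ≤ x - y),
          abs_of_nonneg (by linarith : (0:ℝ) ≤ f x - f y)] at hr
        have h1 : f x ≤ f α + (1+2*δ) := hx.2.2
        have h2 : f α + (1-2*δ) < f y := hy.2.1
        rw [le_div_iff₀ hm]
        nlinarith
    have hpairm : ∀ x ∈ Pm, ∀ y ∈ Pm, x - y ≤ 4*δ/m := by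
      intro x hx y hy
      rcases le_total x y with h | h
      · have : (0:ℝ) ≤ 4*δ/m := by positivity
        linarith
      · have hxc := hPmc x hx
        have hyc := hPmc y hy
        have hr := (hreg x hxc y hyc).1
        have hfyx : f y ≤ f x := hmono hyc.1 hxc.1 h
        rw [abs_of_nonneg (by linarith : (0:ℝ) ≤ x - y),
          abs_of_nonneg (by linarith : (0:ℝ) ≤ f x - f y)] at hr
        have h1 : f x < f α - (1-2*δ) := hx.2.2
        have h2 : f α - (1+2*δ) ≤ f y := hy.2.1
        rw [le_div_iff₀ hm]
        nlinarith
    have hPpbd : (volume Pp).toReal ≤ 4*δ/m :=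
      vol_le_of_pairwise Pp (fun x hx => hx.1) _ (by positivity) hpairp
    have hPmbd : (volume Pm).toReal ≤ 4*δ/m :=
      vol_le_of_pairwise Pm (fun x hx => hx.1) _ (by positivity) hpairm
    have hULsub : Up \ L ⊆ Pp ∪ Pm := by
      rintro x ⟨hxU, hxL⟩
      obtain ⟨hxI2, hxw⟩ := (hUmem x).1 hxU
      have hnot : ¬ |f x - f α| ≤ 1-2*δ := fun h => hxL ((hLmem x).2 ⟨hxI2, h⟩)
      push_neg at hnot
      rw [abs_le] at hxw
      rcases le_total (f α) (f x) with h | h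
      · left
        rw [abs_of_nonneg (by linarith)] at hnot
        exact ⟨hxI2, by constructor <;> linarith [hxw.2]⟩
      · right
        rw [abs_of_nonpos (by linarith)] at hnot
        exact ⟨hxI2, by constructor <;> linarith [hxw.1]⟩
    have hsum : (volume (Up \ L)).toReal ≤ (volume Pp).toReal + (volume Pm).toReal := by
      have h1 : volume (Up \ L) ≤ volume Pp + volume Pm :=
        le_trans (measure_mono hULsub) (measure_union_le _ _)
      have hfinsum : volume Pp + volume Pm ≠ ⊤ := ENNReal.add_ne_top.2 ⟨hfinPp, hfinPm⟩
      have h2 := ENNReal.toReal_mono hfinsum h1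
      rwa [ENNReal.toReal_add hfinPp hfinPm] at h2
    have h8 : 4*δ/m + 4*δ/m = 8*δ/m := by ring
    linarith
  -- assembling
  have hvolA : μ₀ ≤ (volume (nbhdHK f α)).toReal :=
    le_trans hvolL (vol_mono_aux hLA hAI)
  have hvolB : μ₀ ≤ (volume (nbhdHK g α)).toReal :=
    le_trans hvolL (vol_mono_aux hLB hBI)
  have hApos : 0 < (volume (nbhdHK f α)).toReal := lt_of_lt_of_le hμ₀pos hvolA
  have hBpos : 0 < (volume (nbhdHK g α)).toReal := lt_of_lt_of_le hμ₀pos hvolB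
  have hLpos : 0 < (volume L).toReal := lt_of_lt_of_le hμ₀pos hvolL
  have hUf : updateHK f α = (∫ β in nbhdHK f α, f β) / (volume (nbhdHK f α)).toReal := by
    unfold updateHK; rw [if_pos hApos]
  have hUg : updateHK g α = (∫ β in nbhdHK g α, g β) / (volume (nbhdHK g α)).toReal := by
    unfold updateHK; rw [if_pos hBpos]
  have intf : IntegrableOn f (Icc (0:ℝ) 1) volume := hmono.integrableOn_isCompact isCompact_Icc
  have intg : IntegrableOn g (Icc (0:ℝ) 1) volume := hgmono.integrableOn_isCompact isCompact_Icc
  have hUfin : volume Up ≠ ⊤ := by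
    refine ne_top_of_le_ne_top ?_ (measure_mono hUI)
    simp [Real.volume_Icc]
  have hinth : IntegrableOn (fun x => f x - f α) Up volume :=
    (intf.mono_set hUI).sub (integrableOn_const hUfin)
  have hbdh : ∀ x ∈ Up, |f x - f α| ≤ 2 := by
    intro x hx
    have := ((hUmem x).1 hx).2
    linarith
  have t1 := avg_shift (fun x => f x - f α) L (nbhdHK f α) Up hLA hAU hUI mL mA hinth hbdh
    μ₀ (8*δ/m) hμ₀pos hvolL hUL
  have t2 := avg_shift (fun x => f x - f α) L (nbhdHK g α) Up hLB hBU hUI mL mB hinth hbdh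
    μ₀ (8*δ/m) hμ₀pos hvolL hUL
  -- express averages of h in terms of averages of f
  have havg : ∀ S : Set ℝ, S ⊆ Icc (0:ℝ) 1 → MeasurableSet S → 0 < (volume S).toReal →
      (∫ x in S, (f x - f α)) / (volume S).toReal
        = (∫ x in S, f x) / (volume S).toReal - f α := by
    intro S hSI mS hSpos
    have hfin : volume S ≠ ⊤ := by
      refine ne_top_of_le_ne_top ?_ (measure_mono hSI)
      simp [Real.volume_Icc]
    have h1 : (∫ x in S, (f x - f α)) = (∫ x in S, f x) - (volume S).toReal * f α := by
      rw [integral_sub (intf.mono_set hSI)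
        (integrableOn_const hfin)]
      rw [setIntegral_const, smul_eq_mul, Measure.real]
    rw [h1]
    field_simp
  rw [havg _ hAI mA hApos] at t1
  rw [havg _ hBI mB hBpos] at t2
  -- comparison of g-average and f-average over B
  have t3 : |(∫ x in nbhdHK g α, f x) / (volume (nbhdHK g α)).toReal
      - (∫ x in nbhdHK g α, g x) / (volume (nbhdHK g α)).toReal| ≤ δ := by
    have hBfin : volume (nbhdHK g α) ≠ ⊤ := by
      refine ne_top_of_le_ne_top ?_ (measure_mono hBI)
      simp [Real.volume_Icc]
    have hb2 : |∫ x in nbhdHK g α, (f x - g x)| ≤ δ * (volume (nbhdHK g α)).toReal := by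
      have := norm_setIntegral_le_of_norm_le_const (μ := volume) (s := nbhdHK g α)
        (f := fun x => f x - g x) (C := δ) (lt_top_iff_ne_top.2 hBfin)
        (fun x hx => by simpa using (hgδ x (hBI hx)).le)
      simpa [Measure.real] using this
    have hdiff : (∫ x in nbhdHK g α, f x) - (∫ x in nbhdHK g α, g x)
        = ∫ x in nbhdHK g α, (f x - g x) :=
      (integral_sub (intf.mono_set hBI) (intg.mono_set hBI)).symm
    rw [div_sub_div_same, hdiff, abs_div, abs_of_pos hBpos, div_le_iff₀ hBpos]
    nlinarith [hb2]
  -- final arithmetic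
  rw [hUf, hUg]
  have e1 : |(∫ β in nbhdHK f α, f β) / (volume (nbhdHK f α)).toReal
      - (∫ β in nbhdHK g α, g β) / (volume (nbhdHK g α)).toReal|
      ≤ 4*(8*δ/m)/μ₀ + 4*(8*δ/m)/μ₀ + δ := by
    have := abs_sub_le
      ((∫ β in nbhdHK f α, f β) / (volume (nbhdHK f α)).toReal)
      ((∫ β in nbhdHK g α, f β) / (volume (nbhdHK g α)).toReal)
      ((∫ β in nbhdHK g α, g β) / (volume (nbhdHK g α)).toReal)
    have h12 : |(∫ β in nbhdHK f α, f β) / (volume (nbhdHK f α)).toReal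
        - (∫ β in nbhdHK g α, f β) / (volume (nbhdHK g α)).toReal|
        ≤ 4*(8*δ/m)/μ₀ + 4*(8*δ/m)/μ₀ := by
      have := abs_sub_le
        ((∫ β in nbhdHK f α, f β) / (volume (nbhdHK f α)).toReal - f α)
        ((∫ x in L, (f x - f α)) / (volume L).toReal)
        ((∫ β in nbhdHK g α, f β) / (volume (nbhdHK g α)).toReal - f α)
      rw [show ((∫ β in nbhdHK f α, f β) / (volume (nbhdHK f α)).toReal - f α)
          - ((∫ β in nbhdHK g α, f β) / (volume (nbhdHK g α)).toReal - f α)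
          = (∫ β in nbhdHK f α, f β) / (volume (nbhdHK f α)).toReal
          - (∫ β in nbhdHK g α, f β) / (volume (nbhdHK g α)).toReal by ring] at this
      rw [abs_sub_comm] at t2
      linarith
    linarith
  have e2 : 4*(8*δ/m)/μ₀ + 4*(8*δ/m)/μ₀ + δ = δ * C := by
    rw [hC]; field_simp; ring
  rw [e2] at e1
  have h0 : 0 < δ * C := mul_pos hδpos hCpos
  have hh : δ*(2*C) = 2*(δ*C) := by ring
  linarith [e1]
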